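/- Let L > 0, f > 0, M ≥ 0, and let a : ℤ → ℂ satisfy Σ_{m∈ℤ} |a_m| < ∞. Set λ_m = f + i·(2πm/L), let d : ℝ → ℂ be measurable with |d(t)| ≤ M for all t, and let y(t) = Σ_{m∈ℤ} a_m e^{λ_m t} + d(t). For T₁ ≥ 0 define â_n(T₁) = (1/L) ∫_{T₁}^{T₁+L} y(t) e^{−λ_n t} dt. Then Σ_{n∈ℤ} |â_n(T₁) − a_n|² ≤ M² e^{−2 f T₁}. -/

import Mathlib

open MeasureTheory

private lemma orth_int (L : ℝ) (hL : 0 < L) (a : ℝ) (k : ℤ) (hk : k ≠ 0) :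
    ∫ t in a..(a + L), Complex.exp ((Complex.I * ((2 * Real.pi * (k : ℝ) / L : ℝ) : ℂ)) * t) = 0 := by
  set c : ℂ := Complex.I * ((2 * Real.pi * (k : ℝ) / L : ℝ) : ℂ) with hc
  have hLne : (L : ℂ) ≠ 0 := by exact_mod_cast hL.ne'
  have hcne : c ≠ 0 := by
    rw [hc]
    apply mul_ne_zero Complex.I_ne_zero
    simp only [ne_eq, Complex.ofReal_eq_zero]
    have := Real.pi_pos
    intro h
    field_simp at h
    rw [mul_zero] at h
    exact (mul_ne_zero (mul_ne_zero two_ne_zero Real.pi_ne_zero) (by exact_mod_cast hk)) h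

  rw [integral_exp_mul_complex hcne]
  have hcL : c * L = (k : ℂ) * (2 * Real.pi * Complex.I) := by
    rw [hc]
    push_cast
    field_simp
  have : Complex.exp (c * ((a : ℂ) + L)) = Complex.exp (c * a) := by
    rw [mul_add, Complex.exp_add, hcL, Complex.exp_int_mul_two_pi_mul_I, mul_one]
  push_cast
  rw [this, sub_self, zero_div]

/-- Initial-value error estimate of Theorem 2.2 in modal-coefficient form: the coefficients
reconstructed from a length-`L` window of the disturbed output differ from the true ones by
an `ℓ²` error of at most `M e^{−fT₁}`. -/
theorem reconstructed_coefficients_error (L f M : ℝ) (hL : 0 < L) (hf : 0 < f) (hM : 0 ≤ M)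
    (a : ℤ → ℂ) (ha : Summable fun m => ‖a m‖)
    (lam : ℤ → ℂ)
    (hlam : ∀ m : ℤ, lam m = (f : ℂ) + Complex.I * ((2 * Real.pi * (m : ℝ) / L : ℝ) : ℂ))
    (d : ℝ → ℂ) (hdmeas : Measurable d) (hdM : ∀ t : ℝ, ‖d t‖ ≤ M)
    (y : ℝ → ℂ)
    (hy : ∀ t : ℝ, y t = (∑' m : ℤ, a m * Complex.exp (lam m * (t : ℂ))) + d t)
    (ahat : ℝ → ℤ → ℂ)
    (hahat : ∀ (T₁ : ℝ) (n : ℤ),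
      ahat T₁ n = (1 / (L : ℂ)) * ∫ t in T₁..(T₁ + L), y t * Complex.exp (-(lam n) * (t : ℂ)))
    (T₁ : ℝ) (hT₁ : 0 ≤ T₁) :
    Summable (fun n : ℤ => ‖ahat T₁ n - a n‖ ^ 2) ∧
    (∑' n : ℤ, ‖ahat T₁ n - a n‖ ^ 2) ≤ M ^ 2 * Real.exp (-2 * f * T₁) := by
  haveI : Fact (0 < L) := ⟨hL⟩
  open Complex intervalIntegral in
  set g : ℝ → ℂ := fun t => d t * Complex.exp (-(f:ℂ) * t) with hgdef
  set G : AddCircle L → ℂ := AddCircle.liftIoc L T₁ g with hGdef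
  have hle : T₁ ≤ T₁ + L := by linarith
  have hLne : (L : ℂ) ≠ 0 := by exact_mod_cast hL.ne'
  have hre : ∀ m : ℤ, (lam m).re = f := fun m => by rw [hlam]; simp
  have him : ∀ m : ℤ, (lam m).im = 2 * Real.pi * m / L := fun m => by rw [hlam]; simp
  -- norm of terms
  have hterm_norm : ∀ (n m : ℤ) (t : ℝ),
      ‖a m * Complex.exp (lam m * (t:ℂ)) * Complex.exp (-(lam n) * (t:ℂ))‖ = ‖a m‖ := by
    intro n m t
    simp only [norm_mul, Complex.norm_exp]
    have h1 : (lam m * (t:ℂ)).re = f * t := by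
      rw [Complex.mul_re, hre, Complex.ofReal_re, Complex.ofReal_im, mul_zero, sub_zero]
    have h2 : (-(lam n) * (t:ℂ)).re = -(f * t) := by
      rw [Complex.mul_re, Complex.neg_re, Complex.neg_im, hre, Complex.ofReal_re,
        Complex.ofReal_im, mul_zero, sub_zero, neg_mul]
    rw [h1, h2, mul_assoc, ← Real.exp_add, add_neg_cancel, Real.exp_zero, mul_one]
  -- key identity
  have key : ∀ n : ℤ, ahat T₁ n - a n = fourierCoeff G n := by
    intro n
    -- continuity of each term
    have htermcont : ∀ m : ℤ, Continuous (fun t : ℝ =>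
        a m * Complex.exp (lam m * (t:ℂ)) * Complex.exp (-(lam n) * (t:ℂ))) := by
      intro m
      exact ((continuous_const.mul (Complex.continuous_exp.comp
        (continuous_const.mul Complex.continuous_ofReal))).mul
        (Complex.continuous_exp.comp (continuous_const.mul Complex.continuous_ofReal)))
    set S : ℝ → ℂ := fun t => ∑' m : ℤ,
      a m * Complex.exp (lam m * (t:ℂ)) * Complex.exp (-(lam n) * (t:ℂ)) with hSdef
    have hScont : Continuous S := by
      apply continuous_tsum htermcont ha
      intro m t; rw [hterm_norm]
    -- rewrite the integrand
    have hy' : ∀ t : ℝ, y t * Complex.exp (-(lam n) * (t:ℂ))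
        = S t + d t * Complex.exp (-(lam n) * (t:ℂ)) := by
      intro t
      rw [hy t, add_mul]
      congr 1
      exact tsum_mul_right.symm
    -- integrability
    have hS_int : IntervalIntegrable S volume T₁ (T₁ + L) := hScont.intervalIntegrable _ _
    have hd_int : IntervalIntegrable (fun t => d t * Complex.exp (-(lam n) * (t:ℂ)))
        volume T₁ (T₁ + L) := by
      rw [intervalIntegrable_iff_integrableOn_Ioc_of_le hle]
      refine Integrable.mono' (integrable_const (M * Real.exp (-f * T₁)))
        ((hdmeas.mul ((Complex.continuous_exp.comp
          (continuous_const.mul Complex.continuous_ofReal)).measurable)).aestronglyMeasurable) ?_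
      rw [ae_restrict_iff' measurableSet_Ioc]
      refine Filter.Eventually.of_forall fun t ht => ?_
      rw [norm_mul]
      have h2 : ‖Complex.exp (-(lam n) * (t:ℂ))‖ = Real.exp (-(f*t)) := by
        rw [Complex.norm_exp, Complex.mul_re, Complex.neg_re, Complex.neg_im,
          hre, Complex.ofReal_re, Complex.ofReal_im, mul_zero, sub_zero, neg_mul]
      rw [h2]
      have : Real.exp (-(f*t)) ≤ Real.exp (-f * T₁) := by
        apply Real.exp_le_exp.2; nlinarith [ht.1]
      exact mul_le_mul (hdM t) this (Real.exp_nonneg _) hM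
    -- value of the S integral
    have hSint_val : (∫ t in T₁..(T₁ + L), S t) = a n * L := by
      rw [intervalIntegral.integral_of_le hle, hSdef]
      rw [MeasureTheory.integral_tsum
        (fun m => (htermcont m).aestronglyMeasurable)
        ?_]
      · -- sum of individual integrals
        have hsingle : ∀ m : ℤ, (∫ t in Set.Ioc T₁ (T₁ + L),
            a m * Complex.exp (lam m * (t:ℂ)) * Complex.exp (-(lam n) * (t:ℂ)))
            = a m * ∫ t in T₁..(T₁ + L), Complex.exp ((lam m - lam n) * (t:ℂ)) := by
          intro m
          rw [← intervalIntegral.integral_of_le hle, ← intervalIntegral.integral_const_mul]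
          apply intervalIntegral.integral_congr
          intro t _
          dsimp only
          rw [mul_assoc, ← Complex.exp_add]
          congr 1
          ring
        calc (∑' m : ℤ, ∫ t in Set.Ioc T₁ (T₁ + L),
                a m * Complex.exp (lam m * (t:ℂ)) * Complex.exp (-(lam n) * (t:ℂ)))
            = ∑' m : ℤ, a m * ∫ t in T₁..(T₁ + L), Complex.exp ((lam m - lam n) * (t:ℂ)) := by
              exact tsum_congr hsingle
          _ = a n * L := by
              rw [tsum_eq_single n ?_]
              · rw [sub_self]
                simp only [zero_mul, Complex.exp_zero]
                rw [intervalIntegral.integral_const]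
                simp [Complex.real_smul]
              · intro m hm
                have hlamdiff : lam m - lam n
                    = Complex.I * ((2 * Real.pi * ((m - n : ℤ) : ℝ) / L : ℝ) : ℂ) := by
                  rw [hlam, hlam]
                  push_cast
                  field_simp
                  ring
                rw [hlamdiff, orth_int L hL T₁ (m - n) (sub_ne_zero.2 hm), mul_zero]
      · -- lintegral bound
        have heval : ∀ m : ℤ, (∫⁻ t in Set.Ioc T₁ (T₁ + L),
            ‖a m * Complex.exp (lam m * (t:ℂ)) * Complex.exp (-(lam n) * (t:ℂ))‖ₑ)
            = (‖a m‖₊ : ENNReal) * ENNReal.ofReal L := by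
          intro m
          have : ∀ t : ℝ, (‖a m * Complex.exp (lam m * (t:ℂ))
              * Complex.exp (-(lam n) * (t:ℂ))‖ₑ : ENNReal) = (‖a m‖₊ : ENNReal) := by
            intro t
            rw [enorm_eq_nnnorm]
            congr 1
            ext
            exact hterm_norm n m t
          simp_rw [this]
          rw [MeasureTheory.lintegral_const, Measure.restrict_apply_univ, Real.volume_Ioc,
            add_sub_cancel_left]
        simp_rw [heval]
        rw [ENNReal.tsum_mul_right]
        apply ENNReal.mul_ne_top
        · rw [ENNReal.tsum_coe_ne_top_iff_summable]
          exact NNReal.summable_coe.1 (by simpa using ha)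
        · exact ENNReal.ofReal_ne_top
    -- compute fourierCoeff G n
    have hcoeff : fourierCoeff G n
        = (1 / (L:ℂ)) * ∫ t in T₁..(T₁ + L), d t * Complex.exp (-(lam n) * (t:ℂ)) := by
      rw [fourierCoeff_eq_intervalIntegral G n T₁]
      rw [Complex.real_smul]
      push_cast
      congr 1
      rw [intervalIntegral.integral_of_le hle, intervalIntegral.integral_of_le hle]
      apply setIntegral_congr_fun measurableSet_Ioc
      intro x hx
      have hGx : G (x : AddCircle L) = d x * Complex.exp (-(f:ℂ) * x) := by
        rw [hGdef, AddCircle.liftIoc_coe_apply hx]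
      dsimp only
      rw [smul_eq_mul, hGx, fourier_coe_apply, mul_left_comm, ← Complex.exp_add]
      congr 1
      rw [hlam]
      push_cast
      field_simp
      ring
    -- final computation
    rw [hahat, hcoeff]
    rw [intervalIntegral.integral_congr (fun t _ => hy' t)]
    rw [intervalIntegral.integral_add hS_int hd_int, hSint_val]
    field_simp
    ring
  have hgmeas : Measurable g := hdmeas.mul ((Complex.continuous_exp.comp
    (continuous_const.mul Complex.continuous_ofReal)).measurable)
  have hGmeas : Measurable G := by
    have : Measurable ((Set.Ioc T₁ (T₁ + L)).restrict g ∘ (AddCircle.measurableEquivIoc L T₁)) :=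
      (hgmeas.comp measurable_subtype_coe).comp (AddCircle.measurableEquivIoc L T₁).measurable
    exact this
  have hgbound : ∀ t ∈ Set.Ioc T₁ (T₁ + L), ‖g t‖ ≤ M * Real.exp (-f * T₁) := by
    intro t ht
    have h1 : (-(f:ℂ) * t) = ((-(f*t) : ℝ) : ℂ) := by push_cast; ring
    have h2 : ‖Complex.exp (-(f:ℂ) * t)‖ = Real.exp (-(f*t)) := by
      rw [h1, Complex.norm_exp, Complex.ofReal_re]
    rw [hgdef]; simp only [norm_mul, h2]
    have : Real.exp (-(f*t)) ≤ Real.exp (-f * T₁) := by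
      apply Real.exp_le_exp.2; nlinarith [ht.1]
    exact mul_le_mul (hdM t) this (Real.exp_nonneg _) hM
  have hGbound : ∀ x, ‖G x‖ ≤ M * Real.exp (-f * T₁) := by
    intro x
    have : G x = g ((AddCircle.equivIoc L T₁ x : Set.Ioc T₁ (T₁ + L)) : ℝ) := rfl
    rw [this]
    exact hgbound _ (AddCircle.equivIoc L T₁ x).2
  have hmem : MemLp G 2 (@AddCircle.haarAddCircle L ⟨hL⟩) :=
    MemLp.of_bound hGmeas.aestronglyMeasurable _ (Filter.Eventually.of_forall hGbound)
  set F := hmem.toLp G with hFdef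
  have hFcoeff : ∀ n : ℤ, fourierCoeff (⇑F) n = fourierCoeff G n := by
    intro n
    apply MeasureTheory.integral_congr_ae
    filter_upwards [hmem.coeFn_toLp] with t ht
    rw [ht]
  -- summability
  have hsum : Summable (fun n : ℤ => ‖fourierCoeff G n‖ ^ 2) := by
    have h0 := (@fourierBasis L ⟨hL⟩).orthonormal.inner_products_summable (x := F)
    refine h0.congr fun i => ?_
    rw [← HilbertBasis.repr_apply_apply, fourierBasis_repr, hFcoeff]
  -- Parseval bound
  have hpar : (∑' n : ℤ, ‖fourierCoeff G n‖ ^ 2) ≤ M ^ 2 * Real.exp (-2 * f * T₁) := by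
    have h1 : ∀ n : ℤ, fourierCoeff (⇑F) n = fourierCoeff G n := hFcoeff
    have h2 := tsum_sq_fourierCoeff F
    simp_rw [h1] at h2
    rw [h2]
    have hInt : Integrable (fun t : AddCircle L => ‖F t‖ ^ 2) (@AddCircle.haarAddCircle L ⟨hL⟩) := by
      refine Integrable.mono' (integrable_const ((M * Real.exp (-f * T₁)) ^ 2))
        ((Lp.aestronglyMeasurable F).norm.pow 2) ?_
      filter_upwards [hmem.coeFn_toLp] with t ht
      rw [ht, Real.norm_eq_abs, _root_.abs_of_nonneg (by positivity : (0:ℝ) ≤ ‖G t‖ ^ 2)]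
      exact pow_le_pow_left₀ (norm_nonneg _) (hGbound t) 2
    have hle : (∫ t : AddCircle L, ‖F t‖ ^ 2 ∂(@AddCircle.haarAddCircle L ⟨hL⟩))
        ≤ ∫ _t : AddCircle L, (M * Real.exp (-f * T₁)) ^ 2 ∂(@AddCircle.haarAddCircle L ⟨hL⟩) := by
      apply integral_mono_ae hInt (integrable_const _)
      filter_upwards [hmem.coeFn_toLp] with t ht
      rw [ht]
      exact pow_le_pow_left₀ (norm_nonneg _) (hGbound t) 2
    refine hle.trans ?_
    rw [MeasureTheory.integral_const]
    simp only [probReal_univ, one_smul]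
    rw [mul_pow]
    have hexp : Real.exp (-f * T₁) ^ 2 = Real.exp (-2 * f * T₁) := by
      rw [sq, ← Real.exp_add]; ring_nf
    rw [hexp]
  have hfinal : (fun n : ℤ => ‖ahat T₁ n - a n‖ ^ 2) = fun n : ℤ => ‖fourierCoeff G n‖ ^ 2 := by
    funext n
    rw [key n]
  constructor
  · rw [hfinal]; exact hsum
  · rw [hfinal]; exact hpar
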